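/- Let 𝒜 be an epireflective class of topological spaces in which every member is a T0 space and which contains a space with at least two points, and let ℬ be a hereditary AD-class in 𝒜. Assume that for every X ∈ ℬ there exist a space Y ∈ ℬ and a non-isolated point b ∈ Y with {b} closed in Y such that X△_bY belongs to 𝒜. Then ℬ is closed under the formation of prime factors: X_a ∈ ℬ for every X ∈ ℬ and every a ∈ X. -/

import Mathlib

open Topology

universe u v w

/-- A class of topological spaces (underlying types in a fixed universe). -/
def SpaceClass : Type (u + 1) :=
  ∀ (X : Type u), TopologicalSpace X → Prop

/-- Closedness under homeomorphic copies. -/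
def ClosedUnderHomeo (ℬ : SpaceClass.{u}) : Prop :=
  ∀ (X Y : Type u) (tX : TopologicalSpace X) (tY : TopologicalSpace Y),
    Nonempty (@Homeomorph X Y tX tY) → ℬ X tX → ℬ Y tY

/-- An epireflective class: closed under homeomorphic copies, subspaces and
set-indexed topological products. -/
structure IsEpireflectiveClass (𝒜 : SpaceClass.{u}) : Prop where
  homeo : ClosedUnderHomeo 𝒜
  subspace : ∀ (X : Type u) (tX : TopologicalSpace X) (s : Set X),
    𝒜 X tX → 𝒜 s (TopologicalSpace.induced (Subtype.val : s → X) tX)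
  prod : ∀ (ι : Type u) (Y : ι → Type u) (t : ∀ i, TopologicalSpace (Y i)),
    (∀ i, 𝒜 (Y i) (t i)) → 𝒜 (∀ i, Y i) (@Pi.topologicalSpace ι Y t)

/-- The disjoint-union (topological sum) topology on a sigma type. -/
def sigmaTop {ι : Type v} (Y : ι → Type w) (t : ∀ i, TopologicalSpace (Y i)) :
    TopologicalSpace (Σ i, Y i) :=
  ⨆ i, TopologicalSpace.coinduced (Sigma.mk i) (t i)

/-- An AD-class in `𝒜`: a subclass of `𝒜` closed under homeomorphic copies, closed
under topological sums of arbitrary families of its members, and divisible in `𝒜`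
(quotients in `𝒜` of members of `ℬ` belong to `ℬ`). -/
structure IsADClass (𝒜 ℬ : SpaceClass.{u}) : Prop where
  subset : ∀ (X : Type u) (tX : TopologicalSpace X), ℬ X tX → 𝒜 X tX
  homeo : ClosedUnderHomeo ℬ
  sums : ∀ (ι : Type u) (Y : ι → Type u) (t : ∀ i, TopologicalSpace (Y i)),
    (∀ i, ℬ (Y i) (t i)) → ℬ (Σ i, Y i) (sigmaTop Y t)
  divisible : ∀ (X Z : Type u) (tX : TopologicalSpace X) (tZ : TopologicalSpace Z)
    (q : X → Z), ℬ X tX → 𝒜 Z tZ → @IsQuotientMap X Z tX tZ q → ℬ Z tZ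

/-- A class is hereditary if every nonempty subspace of each member belongs to it. -/
def IsHereditary (ℬ : SpaceClass.{u}) : Prop :=
  ∀ (X : Type u) (tX : TopologicalSpace X) (s : Set X), s.Nonempty → ℬ X tX →
    ℬ s (TopologicalSpace.induced (Subtype.val : s → X) tX)

/-- The prime factor `X_a`: the topology on the underlying set of `X` whose open sets
are exactly the sets `U` such that `a ∈ U` implies `U` is a neighbourhood of `a`. -/
def primeFactor {X : Type u} (t : TopologicalSpace X) (a : X) : TopologicalSpace X where
  IsOpen U := a ∈ U → U ∈ @nhds X t a
  isOpen_univ := fun _ => Filter.univ_mem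
  isOpen_inter := fun U V hU hV h => Filter.inter_mem (hU h.1) (hV h.2)
  isOpen_sUnion := fun S hS h => by
    obtain ⟨U, hU, haU⟩ := h
    exact Filter.mem_of_superset (hS U hU haU) (Set.subset_sUnion_of_mem hU)

/-- A prime space: a topological space with exactly one non-isolated point. -/
def IsPrimeSpace (X : Type u) (t : TopologicalSpace X) : Prop :=
  ∃! a : X, ¬ @IsOpen X t {a}

/-- The space `X △_b Y`: the final topology on `X × Y` with respect to the maps
`f : x ↦ (x, b)` and `g_a : y ↦ (a, y)`, one for each `a ∈ X`. -/
def triangleTop {X Y : Type u} (tX : TopologicalSpace X) (tY : TopologicalSpace Y)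
    (b : Y) : TopologicalSpace (X × Y) :=
  TopologicalSpace.coinduced (fun x : X => (x, b)) tX ⊔
    ⨆ a : X, TopologicalSpace.coinduced (fun y : Y => (a, y)) tY

lemma pf_isOpen {X : Type u} {tX : TopologicalSpace X} {a : X} {U : Set X} :
    IsOpen[primeFactor tX a] U ↔ (a ∈ U → U ∈ @nhds X tX a) := Iff.rfl


lemma tri_isOpen_iff {X Y : Type u} {tX : TopologicalSpace X} {tY : TopologicalSpace Y} {b : Y}
    {W : Set (X × Y)} :
    IsOpen[triangleTop tX tY b] W ↔
      (IsOpen[tX] {x | (x, b) ∈ W} ∧ ∀ a : X, IsOpen[tY] {y | (a, y) ∈ W}) := by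
  have e : triangleTop tX tY b = TopologicalSpace.coinduced (fun x : X => (x, b)) tX ⊔
      ⨆ a : X, TopologicalSpace.coinduced (fun y : Y => (a, y)) tY := rfl
  constructor
  · intro h
    rw [e] at h
    obtain ⟨h1, h2⟩ := isOpen_sup.mp h
    exact ⟨h1, fun a => isOpen_iSup_iff.mp h2 a⟩
  · intro ⟨h1, h2⟩
    rw [e]
    exact isOpen_sup.mpr ⟨h1, isOpen_iSup_iff.mpr h2⟩



lemma mem_of_inducing_family (𝒜 : SpaceClass.{u}) (hA : IsEpireflectiveClass 𝒜)
    (ι : Type u) (Z : ι → Type u) (tZ : ∀ i, TopologicalSpace (Z i))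
    (hZ : ∀ i, 𝒜 (Z i) (tZ i)) (W : Type u) (f : ∀ i, W → Z i)
    (hinj : ∀ w w' : W, (∀ i, f i w = f i w') → w = w') :
    𝒜 W (⨅ i, TopologicalSpace.induced (f i) (tZ i)) := by
  letI tP : TopologicalSpace (∀ i, Z i) := @Pi.topologicalSpace ι Z tZ
  letI tW : TopologicalSpace W := ⨅ i, TopologicalSpace.induced (f i) (tZ i)
  have hP : 𝒜 (∀ i, Z i) tP := hA.prod ι Z tZ hZ
  let e : W → ∀ i, Z i := fun w i => f i w
  have hind : tW = tP.induced e := by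
    have h1 : tP = ⨅ i, TopologicalSpace.induced (fun p : ∀ j, Z j => p i) (tZ i) := rfl
    rw [h1, induced_iInf]
    exact iInf_congr fun i => (induced_compose (f := e) (g := fun p : ∀ j, Z j => p i)).symm
  have hemb : IsEmbedding e := ⟨⟨hind⟩, fun w w' h => hinj w w' fun i => congrFun h i⟩
  have hsub : 𝒜 (Set.range e) (TopologicalSpace.induced Subtype.val tP) :=
    hA.subspace _ tP (Set.range e) hP
  exact hA.homeo _ _ _ _ ⟨(Topology.IsEmbedding.toHomeomorph hemb).symm⟩ hsub

lemma isOpen_of_pieces {X : Type u} [TopologicalSpace X] {U : Set X} {a : X}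
    (h1 : ∀ x ∈ U, x ≠ a → IsOpen ({x} : Set X))
    (h2 : a ∈ U → ∃ V, V ⊆ U ∧ IsOpen V ∧ a ∈ V) : IsOpen U := by
  classical
  by_cases haU : a ∈ U
  · obtain ⟨V, hVU, hVopen, haV⟩ := h2 haU
    have hUeq : U = V ∪ ⋃ (x : X) (_ : x ∈ U ∧ x ≠ a), {x} := by
      ext z
      simp only [Set.mem_union, Set.mem_iUnion, Set.mem_singleton_iff]
      constructor
      · intro hz
        by_cases hza : z = a
        · exact Or.inl (hza ▸ haV)
        · exact Or.inr ⟨z, ⟨hz, hza⟩, rfl⟩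
      · rintro (hz | ⟨w, hw, rfl⟩)
        · exact hVU hz
        · exact hw.1
    rw [hUeq]
    exact hVopen.union (isOpen_iUnion fun x => isOpen_iUnion fun h => h1 x h.1 h.2)
  · have hUeq : U = ⋃ (x : X) (_ : x ∈ U ∧ x ≠ a), {x} := by
      ext z
      simp only [Set.mem_iUnion, Set.mem_singleton_iff]
      exact ⟨fun hz => ⟨z, ⟨hz, fun h => haU (h ▸ hz)⟩, rfl⟩, fun ⟨w, hw, h⟩ => h ▸ hw.1⟩
    rw [hUeq]
    exact isOpen_iUnion fun x => isOpen_iUnion fun h => h1 x h.1 h.2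


lemma pf_isOpen' {X : Type u} {tX : TopologicalSpace X} {a : X} {U : Set X} :
    IsOpen[primeFactor tX a] U ↔ (a ∈ U → U ∈ @nhds X tX a) := Iff.rfl


lemma primeFactor_mem_A (𝒜 : SpaceClass.{u}) (hA : IsEpireflectiveClass 𝒜)
    (X : Type u) (tX : TopologicalSpace X) (hT0 : @T0Space X tX) (hXA : 𝒜 X tX) (a : X) :
    𝒜 X (primeFactor tX a) := by
  classical
  letI := tX
  let ι : Type u := Option {x : X // x ≠ a}
  let Z : ι → Type u := fun o => Option.elim o X (fun x => ({a, x.val} : Set X))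
  let tZ : ∀ o, TopologicalSpace (Z o) := fun o => match o with
    | none => tX
    | some _ => TopologicalSpace.induced Subtype.val tX
  have hZ : ∀ o, 𝒜 (Z o) (tZ o) := fun o => match o with
    | none => hXA
    | some _ => hA.subspace X tX _ hXA
  let C : {x : X // x ≠ a} → Prop := fun x => ∃ O : Set X, IsOpen O ∧ a ∈ O ∧ x.val ∉ O
  let f : ∀ o : ι, X → Z o := fun o => match o with
    | none => fun z => z
    | some x => fun z =>
        if C x then (if z = x.val then ⟨a, Or.inl rfl⟩ else ⟨x.val, Or.inr rfl⟩)
        else (if z = x.val then ⟨x.val, Or.inr rfl⟩ else ⟨a, Or.inl rfl⟩)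
  -- the composite with Subtype.val
  let g : {x : X // x ≠ a} → X → X := fun x z =>
    if C x then (if z = x.val then a else x.val)
    else (if z = x.val then x.val else a)
  have hcomp : ∀ x : {x : X // x ≠ a},
      TopologicalSpace.induced (f (some x)) (tZ (some x)) =
        TopologicalSpace.induced (g x) tX := by
    intro x
    have : tZ (some x) = TopologicalSpace.induced (Subtype.val : ({a, x.val} : Set X) → X) tX :=
      rfl
    rw [this]
    refine (induced_compose (g := (Subtype.val : ({a, x.val} : Set X) → X))
      (f := (f (some x) : X → ({a, x.val} : Set X)))).trans ?_
    congr 1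
    funext z
    show Subtype.val (f (some x) z) = g x z
    by_cases hC : C x <;> by_cases hz : z = x.val <;>
      simp [f, g, hC, hz]
  have key : primeFactor tX a = ⨅ o, TopologicalSpace.induced (f o) (tZ o) := by
    apply le_antisymm
    · refine le_iInf fun o => ?_
      rw [TopologicalSpace.le_def]
      intro U hU
      match o with
      | none =>
        have h1 : TopologicalSpace.induced (f none) (tZ none) = tX :=
          induced_id (t := tX)
        rw [h1] at hU
        exact fun haU => hU.mem_nhds haU
      | some x =>
        rw [hcomp x, isOpen_induced_iff] at hU
        obtain ⟨O, hO, rfl⟩ := hU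
        rw [pf_isOpen']
        intro haU
        have hax : ¬ (a = x.val) := fun h => x.2 h.symm
        by_cases hC : C x
        · -- g x = fun z => if z = x.val then a else x.val ; g x a = x.val
          have hxO : x.val ∈ O := by
            simpa [g, hC, hax] using haU
          by_cases haO : a ∈ O
          · refine Filter.mem_of_superset Filter.univ_mem fun z _ => ?_
            show g x z ∈ O
            by_cases hz : z = x.val <;> simp [g, hC, hz, haO, hxO]
          · obtain ⟨O', hO', haO', hxO'⟩ := id hC
            refine Filter.mem_of_superset (hO'.mem_nhds haO') fun z hz => ?_
            show g x z ∈ O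
            have hz' : ¬ (z = x.val) := fun h => hxO' (h ▸ hz)
            simp [g, hC, hz', hxO]
        · -- g x = fun z => if z = x.val then x.val else a ; g x a = a
          have haO : a ∈ O := by
            simpa [g, hC, hax] using haU
          have hxO : x.val ∈ O := by
            by_contra hxO
            exact hC ⟨O, hO, haO, hxO⟩
          refine Filter.mem_of_superset Filter.univ_mem fun z _ => ?_
          show g x z ∈ O
          by_cases hz : z = x.val <;> simp [g, hC, hz, haO, hxO]
    · rw [TopologicalSpace.le_def]
      intro U hU
      rw [pf_isOpen'] at hU
      -- singletons {x}, x ≠ a, are open in the infimum topology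
      have hsing : ∀ x : {x : X // x ≠ a},
          IsOpen[⨅ o, TopologicalSpace.induced (f o) (tZ o)] {x.val} := by
        intro x
        refine TopologicalSpace.le_def.mp
          (iInf_le (fun o => TopologicalSpace.induced (f o) (tZ o)) (some x)) _ ?_
        rw [hcomp x, isOpen_induced_iff]
        by_cases hC : C x
        · obtain ⟨O', hO', haO', hxO'⟩ := id hC
          refine ⟨O', hO', ?_⟩
          ext z
          by_cases hz : z = x.val <;> simp [g, hC, hz, haO', hxO']
        · have hsep : ∃ O : Set X, IsOpen O ∧ Xor' (x.val ∈ O) (a ∈ O) :=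
            not_inseparable_iff_exists_open.mp fun h => x.2 (h.eq)
          obtain ⟨O, hO, hxor⟩ := hsep
          rcases hxor with ⟨hxO, haO⟩ | ⟨haO, hxO⟩
          · refine ⟨O, hO, ?_⟩
            ext z
            by_cases hz : z = x.val <;> simp [g, hC, hz, hxO, haO]
          · exact absurd ⟨O, hO, haO, hxO⟩ hC
      have hopenX : ∀ V : Set X, IsOpen[tX] V →
          IsOpen[⨅ o, TopologicalSpace.induced (f o) (tZ o)] V := by
        intro V hV
        refine TopologicalSpace.le_def.mp
          (iInf_le (fun o => TopologicalSpace.induced (f o) (tZ o)) none) _ ?_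
        have h1 : TopologicalSpace.induced (f none) (tZ none) = tX :=
          induced_id (t := tX)
        rw [h1]
        exact hV
      refine @isOpen_of_pieces X (⨅ o, TopologicalSpace.induced (f o) (tZ o)) U a
        (fun x hx hxa => hsing ⟨x, hxa⟩) (fun haU => ?_)
      obtain ⟨V, hVU, hVopen, haV⟩ := mem_nhds_iff.mp (hU haU)
      exact ⟨V, hVU, hopenX V hVopen, haV⟩
  rw [key]
  exact mem_of_inducing_family 𝒜 hA ι Z tZ hZ X f (fun w w' h => h none)

/-- If for every `X` in a hereditary AD-class `ℬ` (in an epireflective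
class `𝒜` of T0 spaces containing a space with two points) there are `Y ∈ ℬ` and a
non-isolated `b ∈ Y` with `{b}` closed such that `X △_b Y ∈ 𝒜`, then `ℬ` is closed
under prime factors. -/
theorem statement2 (𝒜 ℬ : SpaceClass.{u})
    (hA : IsEpireflectiveClass 𝒜)
    (hT0 : ∀ (X : Type u) (tX : TopologicalSpace X), 𝒜 X tX → @T0Space X tX)
    (hA2 : ∃ (X : Type u) (tX : TopologicalSpace X), 𝒜 X tX ∧ ∃ x y : X, x ≠ y)
    (hB : IsADClass 𝒜 ℬ)
    (hher : IsHereditary ℬ)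
    (htri : ∀ (X : Type u) (tX : TopologicalSpace X), ℬ X tX →
      ∃ (Y : Type u) (tY : TopologicalSpace Y) (b : Y),
        ℬ Y tY ∧ ¬ @IsOpen Y tY {b} ∧ @IsClosed Y tY {b} ∧
          𝒜 (X × Y) (triangleTop tX tY b)) :
    ∀ (X : Type u) (tX : TopologicalSpace X) (a : X),
      ℬ X tX → ℬ X (primeFactor tX a) := by
  classical
  intro X tX a hX
  obtain ⟨Y, tY, b, hYB, hbno, hbcl, hAtri⟩ := htri X tX hX
  -- there is a point distinct from b
  have hy0 : ∃ y : Y, y ≠ b := by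
    by_contra h
    push_neg at h
    have hbu : ({b} : Set Y) = Set.univ := Set.eq_univ_of_forall fun y => h y
    exact hbno (hbu ▸ (@isOpen_univ Y tY))
  obtain ⟨y₀, hy₀⟩ := hy0
  -- Step B : X △_b Y belongs to ℬ
  let F : Option X → Type u := fun o => Option.elim o X fun _ => Y
  let tF : ∀ o, TopologicalSpace (F o) := fun o => match o with
    | none => tX
    | some _ => tY
  let Q : (Σ o, F o) → X × Y := fun p =>
    match p with
    | ⟨none, x⟩ => (x, b)
    | ⟨some a', y⟩ => (a', y)
  have hco : triangleTop tX tY b = TopologicalSpace.coinduced Q (sigmaTop F tF) := by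
    refine TopologicalSpace.ext_iff.mpr fun W => ?_
    rw [tri_isOpen_iff, isOpen_coinduced (t := sigmaTop F tF)]
    have e : sigmaTop F tF = ⨆ o, TopologicalSpace.coinduced (Sigma.mk o) (tF o) := rfl
    rw [e, isOpen_iSup_iff]
    constructor
    · rintro ⟨h1, h2⟩ o
      match o with
      | none => exact h1
      | some a' => exact h2 a'
    · intro h
      exact ⟨h none, fun a' => h (some a')⟩
  have hsum : ℬ (Σ o, F o) (sigmaTop F tF) :=
    hB.sums (Option X) F tF fun o => match o with
      | none => hX
      | some _ => hYB
  have hQsurj : Function.Surjective Q := fun p => ⟨⟨some p.1, p.2⟩, rfl⟩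
  have hTB : ℬ (X × Y) (triangleTop tX tY b) :=
    hB.divisible _ _ _ _ Q hsum hAtri
      (@IsQuotientMap.mk _ _ (sigmaTop F tF) (triangleTop tX tY b) Q (@IsCoinducing.mk _ _ (sigmaTop F tF) (triangleTop tX tY b) Q hco) hQsurj)
  -- Step C : the subspace S
  let S : Set (X × Y) := {p : X × Y | p.2 ≠ b ∨ p = (a, b)}
  let tS : TopologicalSpace S :=
    TopologicalSpace.induced (Subtype.val : S → X × Y) (triangleTop tX tY b)
  have hSB : ℬ S tS := hher _ _ S ⟨(a, b), Or.inr rfl⟩ hTB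
  let q : S → X := fun s => s.val.1
  have hqsurj : Function.Surjective q := fun x => ⟨⟨(x, y₀), Or.inl hy₀⟩, rfl⟩
  -- Step E : q is a quotient map onto the prime factor
  have hq : primeFactor tX a = TopologicalSpace.coinduced q tS := by
    refine TopologicalSpace.ext_iff.mpr fun U => ?_
    rw [isOpen_coinduced (t := tS), pf_isOpen']
    have eS : tS = TopologicalSpace.induced (Subtype.val : S → X × Y) (triangleTop tX tY b) :=
      rfl
    rw [eS, isOpen_induced_iff (t := triangleTop tX tY b) (f := (Subtype.val : S → X × Y))
      (s := q ⁻¹' U)]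
    constructor
    · intro hU
      by_cases haU : a ∈ U
      · obtain ⟨A, hAU, hAopen, haA⟩ := mem_nhds_iff.mp (hU haU)
        refine ⟨{p : X × Y | (p.1 ∈ A ∧ p.2 = b) ∨ p.1 = a ∨ (p.1 ∈ U ∧ p.1 ≠ a ∧ p.2 ≠ b)},
          ?_, ?_⟩
        · rw [tri_isOpen_iff]
          constructor
          · have : {x : X | (x, b) ∈ {p : X × Y | (p.1 ∈ A ∧ p.2 = b) ∨ p.1 = a ∨
                (p.1 ∈ U ∧ p.1 ≠ a ∧ p.2 ≠ b)}} = A := by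
              ext x
              simp only [Set.mem_setOf_eq]
              constructor
              · rintro (⟨hx, -⟩ | hx | ⟨-, -, hb⟩)
                · exact hx
                · have hx' : x = a := hx
                  exact hx' ▸ haA
                · exact absurd rfl hb
              · intro hx
                exact Or.inl ⟨hx, trivial⟩
            rw [this]
            exact hAopen
          · intro a'
            by_cases h1 : a' = a
            · have : {y : Y | (a', y) ∈ {p : X × Y | (p.1 ∈ A ∧ p.2 = b) ∨ p.1 = a ∨
                  (p.1 ∈ U ∧ p.1 ≠ a ∧ p.2 ≠ b)}} = Set.univ := by
                ext y
                simp [h1]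
              rw [this]
              exact @isOpen_univ Y tY
            · by_cases h2 : a' ∈ A
              · have : {y : Y | (a', y) ∈ {p : X × Y | (p.1 ∈ A ∧ p.2 = b) ∨ p.1 = a ∨
                    (p.1 ∈ U ∧ p.1 ≠ a ∧ p.2 ≠ b)}} = Set.univ := by
                  ext y
                  simp only [Set.mem_setOf_eq, Set.mem_univ, iff_true]
                  by_cases hyb : y = b
                  · exact Or.inl ⟨h2, hyb⟩
                  · exact Or.inr (Or.inr ⟨hAU h2, h1, hyb⟩)
                rw [this]
                exact @isOpen_univ Y tY
              · by_cases h3 : a' ∈ U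
                · have : {y : Y | (a', y) ∈ {p : X × Y | (p.1 ∈ A ∧ p.2 = b) ∨ p.1 = a ∨
                      (p.1 ∈ U ∧ p.1 ≠ a ∧ p.2 ≠ b)}} = {b}ᶜ := by
                    ext y
                    simp only [Set.mem_setOf_eq, Set.mem_compl_iff, Set.mem_singleton_iff]
                    constructor
                    · rintro (⟨hA', -⟩ | h | ⟨-, -, hyb⟩)
                      · exact absurd hA' h2
                      · exact absurd h h1
                      · exact hyb
                    · intro hyb
                      exact Or.inr (Or.inr ⟨h3, h1, hyb⟩)
                  rw [this]
                  exact (@IsClosed.isOpen_compl Y tY {b} hbcl)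
                · have : {y : Y | (a', y) ∈ {p : X × Y | (p.1 ∈ A ∧ p.2 = b) ∨ p.1 = a ∨
                      (p.1 ∈ U ∧ p.1 ≠ a ∧ p.2 ≠ b)}} = ∅ := by
                    ext y
                    simp only [Set.mem_setOf_eq, Set.mem_empty_iff_false, iff_false]
                    rintro (⟨hA', -⟩ | h | ⟨hU', -, -⟩)
                    · exact h2 hA'
                    · exact h1 h
                    · exact h3 hU'
                  rw [this]
                  exact @isOpen_empty Y tY
        · ext s
          obtain ⟨⟨x, y⟩, hs⟩ := s
          simp only [Set.mem_preimage, Set.mem_setOf_eq]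
          show ((x ∈ A ∧ y = b) ∨ x = a ∨ (x ∈ U ∧ x ≠ a ∧ y ≠ b)) ↔ x ∈ U
          constructor
          · rintro (⟨hx, -⟩ | hx | ⟨hx, -, -⟩)
            · exact hAU hx
            · exact hx ▸ haU
            · exact hx
          · intro hx
            by_cases hxa : x = a
            · exact Or.inr (Or.inl hxa)
            · have hyb : y ≠ b := by
                rcases hs with h | h
                · exact h
                · exact absurd (congrArg Prod.fst h) hxa
              exact Or.inr (Or.inr ⟨hx, hxa, hyb⟩)
      · refine ⟨{p : X × Y | p.1 ∈ U ∧ p.2 ≠ b}, ?_, ?_⟩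
        · rw [tri_isOpen_iff]
          constructor
          · have : {x : X | (x, b) ∈ {p : X × Y | p.1 ∈ U ∧ p.2 ≠ b}} = ∅ := by
              ext x
              simp
            rw [this]
            exact @isOpen_empty X tX
          · intro a'
            by_cases h3 : a' ∈ U
            · have : {y : Y | (a', y) ∈ {p : X × Y | p.1 ∈ U ∧ p.2 ≠ b}} = {b}ᶜ := by
                ext y
                simp [h3]
              rw [this]
              exact (@IsClosed.isOpen_compl Y tY {b} hbcl)
            · have : {y : Y | (a', y) ∈ {p : X × Y | p.1 ∈ U ∧ p.2 ≠ b}} = ∅ := by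
                ext y
                simp [h3]
              rw [this]
              exact @isOpen_empty Y tY
        · ext s
          obtain ⟨⟨x, y⟩, hs⟩ := s
          simp only [Set.mem_preimage, Set.mem_setOf_eq]
          show (x ∈ U ∧ y ≠ b) ↔ x ∈ U
          refine ⟨fun h => h.1, fun hx => ⟨hx, ?_⟩⟩
          rcases hs with h | h
          · exact h
          · have hxa : x = a := congrArg Prod.fst h
            exact absurd (hxa ▸ hx) haU
    · rintro ⟨W, hW, hWV⟩ haU
      rw [tri_isOpen_iff] at hW
      obtain ⟨h1, h2⟩ := hW
      refine mem_nhds_iff.mpr ⟨{x : X | (x, b) ∈ W}, fun x hx => ?_, h1, ?_⟩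
      · have hsl := h2 x
        have hex : ∃ y', y' ≠ b ∧ (x, y') ∈ W := by
          by_contra hno
          push_neg at hno
          have hsb : {y : Y | (x, y) ∈ W} = {b} := by
            ext y
            simp only [Set.mem_setOf_eq, Set.mem_singleton_iff]
            refine ⟨fun hy => ?_, fun hy => ?_⟩
            · by_contra hyb
              exact (hno y hyb) hy
            · rw [hy]
              exact hx
          exact hbno (hsb ▸ hsl)
        obtain ⟨y', hy', hxy'⟩ := hex
        have : (⟨(x, y'), Or.inl hy'⟩ : S) ∈ q ⁻¹' U := by
          rw [← hWV]
          exact hxy'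
        exact this
      · have : (⟨(a, b), Or.inr rfl⟩ : S) ∈ Subtype.val ⁻¹' W := by
          rw [hWV]
          exact haU
        exact this
  have hXA : 𝒜 X tX := hB.subset X tX hX
  have hXaA : 𝒜 X (primeFactor tX a) :=
    primeFactor_mem_A 𝒜 hA X tX (hT0 X tX hXA) hXA a
  exact hB.divisible S X tS (primeFactor tX a) q hSB hXaA
    (@IsQuotientMap.mk S X tS (primeFactor tX a) q (@IsCoinducing.mk S X tS (primeFactor tX a) q hq) hqsurj)
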